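/- Let G=(V,E) be a finite simple undirected connected graph with |V| ≥ 2 and diameter Δ, and let ρ ∈ (0,1]. Then there exists a seed set S ⊆ V with |S| ≤ 2 + Σ_{v ∈ V, d(v) > 1/ρ} (⌈ρ·d(v)⌉ + 1) such that S ⊆ Active^{(1)}(S,G,ρ) and Active^{(Δ)}(S,G,ρ) = V. -/

import Mathlib

/-- One round of the synchronous reversible cascade on an undirected graph:
`ractive G ρ S k` is the set of active vertices in round `k`, starting from seed set `S`. -/
def ractive {V : Type*} (G : SimpleGraph V) (ρ : ℝ) (S : Set V) : ℕ → Set V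
  | 0 => S
  | k + 1 =>
      {v | 0 < (G.neighborSet v).ncard ∧
        ρ * (G.neighborSet v).ncard ≤ ((G.neighborSet v ∩ ractive G ρ S k).ncard : ℝ)} ∪
      {v | v ∈ S ∧ (G.neighborSet v).ncard = 0}

/-- `minSeed G ρ k` is the minimum number of seeds activating all vertices in round `k`. -/
noncomputable def minSeed {V : Type*} (G : SimpleGraph V) (ρ : ℝ) (k : ℕ) : ℕ :=
  sInf {m | ∃ S : Set V, S.ncard = m ∧ ractive G ρ S k = Set.univ}

lemma ractive_mono {V : Type*} [Fintype V] (G : SimpleGraph V) (ρ : ℝ) (S : Set V)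
    (h1 : S ⊆ ractive G ρ S 1) : ∀ k, ractive G ρ S k ⊆ ractive G ρ S (k+1) := by
  intro k
  induction k with
  | zero => exact h1
  | succ k ih =>
    intro v hv
    rcases hv with h | h
    · left
      refine ⟨h.1, h.2.trans ?_⟩
      exact_mod_cast Nat.cast_le.mpr
        (Set.ncard_le_ncard (Set.inter_subset_inter_right _ ih) (Set.toFinite _))
    · right; exact h

lemma seed_mem_ractive {V : Type*} [Fintype V] (G : SimpleGraph V) (ρ : ℝ) (S : Set V)
    (h1 : S ⊆ ractive G ρ S 1) : ∀ k, S ⊆ ractive G ρ S k := by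
  intro k
  induction k with
  | zero => exact le_refl _
  | succ k ih => exact ih.trans (ractive_mono G ρ S h1 k)

lemma exists_adj_of_connected {V : Type*} [Fintype V] (G : SimpleGraph V)
    (hconn : G.Connected) (hV : 2 ≤ Fintype.card V) (v : V) : ∃ u, G.Adj v u := by
  have : Nontrivial V := Fintype.one_lt_card_iff_nontrivial.mp hV
  obtain ⟨w, hw⟩ := exists_ne v
  have hd : G.dist v w ≠ 0 :=
    Nat.pos_iff_ne_zero.mp ((hconn v w).pos_dist_of_ne (fun h => hw h.symm))
  obtain ⟨p, hp⟩ := (hconn v w).exists_walk_length_eq_dist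
  cases p with
  | nil => exact absurd rfl hw
  | cons h q => exact ⟨_, h⟩

lemma ncard_neighbor_pos {V : Type*} [Fintype V] (G : SimpleGraph V)
    (hconn : G.Connected) (hV : 2 ≤ Fintype.card V) (v : V) :
    0 < (G.neighborSet v).ncard := by
  obtain ⟨u, hu⟩ := exists_adj_of_connected G hconn hV v
  exact Set.ncard_pos (Set.toFinite _) |>.mpr ⟨u, hu⟩

lemma exists_adj_dist_lt {V : Type*} (G : SimpleGraph V) {a v : V} {k : ℕ}
    (h : G.dist a v = k + 1) (hr : G.Reachable a v) :
    ∃ u, G.Adj v u ∧ G.dist a u ≤ k := by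
  obtain ⟨p, hp⟩ := hr.exists_walk_length_eq_dist
  have hq : p.reverse.length = k + 1 := by rw [SimpleGraph.Walk.length_reverse, hp, h]
  cases hq' : p.reverse with
  | nil => rw [hq'] at hq; simp at hq
  | cons hadj q =>
    refine ⟨_, hadj, ?_⟩
    rw [SimpleGraph.dist_comm]
    calc G.dist _ a ≤ q.length := SimpleGraph.dist_le q
    _ ≤ k := by rw [hq'] at hq; simpa using Nat.le_of_eq (Nat.succ_injective hq)

open Classical in
theorem stmt_3 {V : Type*} [Fintype V] (G : SimpleGraph V)
    (hconn : G.Connected) (hV : 2 ≤ Fintype.card V)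
    (ρ : ℝ) (hρ0 : 0 < ρ) (hρ1 : ρ ≤ 1) :
    ∃ S : Set V,
      (S.ncard : ℝ) ≤
        2 + ∑ v ∈ Finset.univ.filter (fun v : V => 1 / ρ < ((G.neighborSet v).ncard : ℝ)),
          ((⌈ρ * ((G.neighborSet v).ncard : ℝ)⌉ : ℝ) + 1) ∧
      S ⊆ ractive G ρ S 1 ∧ ractive G ρ S G.diam = Set.univ := by
  have hnt : Nontrivial V := Fintype.one_lt_card_iff_nontrivial.mp hV
  have hdegpos := ncard_neighbor_pos G hconn hV
  set d : V → ℕ := fun v => (G.neighborSet v).ncard with hd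
  -- ceiling bound
  have hceil : ∀ v, (⌈ρ * (d v : ℝ)⌉).toNat ≤ d v := by
    intro v
    rw [Int.toNat_le]
    apply Int.ceil_le.mpr
    push_cast
    nlinarith [Nat.cast_nonneg (α := ℝ) (d v)]
  -- choose neighbor subsets
  have hT : ∀ v, ∃ t : Finset V, t ⊆ (G.neighborSet v).toFinset ∧
      t.card = (⌈ρ * (d v : ℝ)⌉).toNat := by
    intro v
    apply Finset.exists_subset_card_eq
    rw [← Set.ncard_eq_toFinset_card']
    exact hceil v
  choose T hTsub hTcard using hT
  -- the edge (a, b)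
  obtain ⟨a⟩ := (inferInstance : Nonempty V)
  obtain ⟨b, hab⟩ := exists_adj_of_connected G hconn hV a
  -- hard vertices
  set H : Finset V := Finset.univ.filter (fun v : V => 1 / ρ < (d v : ℝ)) with hH
  set S₀ : Finset V := ({a, b} : Finset V) ∪ H.biUnion (fun v => insert v (T v)) with hS₀
  set S : Set V := ↑S₀ with hS
  -- membership facts
  have haS : a ∈ S := by simp [hS, hS₀]
  have hbS : b ∈ S := by simp [hS, hS₀]
  have hHS : ∀ v ∈ H, v ∈ S := by
    intro v hv
    simp only [hS, hS₀, Finset.coe_union, Set.mem_union, Finset.mem_coe, Finset.mem_biUnion]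
    exact Or.inr ⟨v, hv, Finset.mem_insert_self _ _⟩
  have hTS : ∀ v ∈ H, ∀ u ∈ T v, u ∈ S := by
    intro v hv u hu
    simp only [hS, hS₀, Finset.coe_union, Set.mem_union, Finset.mem_coe, Finset.mem_biUnion]
    exact Or.inr ⟨v, hv, Finset.mem_insert_of_mem hu⟩
  -- easy vertices have small threshold
  have heasy : ∀ v, v ∉ H → ρ * (d v : ℝ) ≤ 1 := by
    intro v hv
    simp only [hH, Finset.mem_filter, Finset.mem_univ, true_and, not_lt] at hv
    calc ρ * (d v : ℝ) ≤ ρ * (1 / ρ) := by nlinarith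
    _ = 1 := by field_simp
  -- counting helper
  have hkey : ∀ (s : V) (F : Finset V), ↑F ⊆ G.neighborSet s ∩ S →
      (F.card : ℝ) ≤ ((G.neighborSet s ∩ S).ncard : ℝ) := by
    intro s F hF
    have := Set.ncard_le_ncard hF (Set.toFinite _)
    rw [Set.ncard_coe_finset] at this
    exact_mod_cast this
  -- seeds are active in round 1
  have hseed : S ⊆ ractive G ρ S 1 := by
    intro s hs
    left
    refine ⟨hdegpos s, ?_⟩
    show ρ * (d s : ℝ) ≤ ((G.neighborSet s ∩ S).ncard : ℝ)
    by_cases hsH : s ∈ H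
    · refine le_trans ?_ (hkey s (T s) ?_)
      · rw [hTcard]
        have h0 : (0:ℝ) ≤ ρ * (d s : ℝ) := by positivity
        have h3 : ((⌈ρ * (d s : ℝ)⌉.toNat : ℕ) : ℝ) = ((⌈ρ * (d s : ℝ)⌉ : ℤ) : ℝ) := by
          exact_mod_cast congrArg (fun z : ℤ => (z : ℝ)) (Int.toNat_of_nonneg (Int.ceil_nonneg h0))
        rw [h3]
        exact Int.le_ceil _
      · intro x hx
        rw [Finset.mem_coe] at hx
        exact ⟨Set.mem_toFinset.mp (hTsub s hx), hTS s hsH x hx⟩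
    · -- easy seed: one active neighbor suffices
      obtain ⟨u, huadj, huS⟩ : ∃ u, G.Adj s u ∧ u ∈ S := by
        simp only [hS, hS₀, Finset.coe_union, Set.mem_union, Finset.mem_coe,
          Finset.mem_biUnion, Finset.mem_insert, Finset.mem_singleton] at hs
        rcases hs with (rfl | rfl) | ⟨v, hvH, hsv⟩
        · exact ⟨b, hab, hbS⟩
        · exact ⟨a, hab.symm, haS⟩
        · rcases hsv with rfl | hsT
          · exact absurd hvH hsH
          · exact ⟨v, (Set.mem_toFinset.mp (hTsub v hsT)).symm, hHS v hvH⟩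
      refine le_trans (heasy s hsH) ?_
      have hsub1 : (↑({u} : Finset V) : Set V) ⊆ G.neighborSet s ∩ S := by
        intro x hx
        rw [Finset.coe_singleton, Set.mem_singleton_iff] at hx
        subst hx
        exact ⟨huadj, huS⟩
      have h4 := hkey s {u} hsub1
      simpa using h4
  -- spread of activation
  have hspread : ∀ k, ∀ v, G.dist a v ≤ k → v ∈ ractive G ρ S k := by
    intro k
    induction k with
    | zero =>
      intro v hv
      have : a = v := hconn.dist_eq_zero_iff.mp (Nat.le_zero.mp hv)
      subst this; exact haS
    | succ k ih =>
      intro v hv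
      by_cases hvk : G.dist a v ≤ k
      · exact ractive_mono G ρ S hseed k (ih v hvk)
      · have hdist : G.dist a v = k + 1 := le_antisymm hv (Nat.succ_le_of_lt (not_le.mp hvk))
        obtain ⟨u, huadj, hud⟩ := exists_adj_dist_lt G hdist (hconn a v)
        by_cases hvH : v ∈ H
        · exact seed_mem_ractive G ρ S hseed (k+1) (hHS v hvH)
        · left
          refine ⟨hdegpos v, le_trans (heasy v hvH) ?_⟩
          have h1 : ({u} : Set V) ⊆ G.neighborSet v ∩ ractive G ρ S k :=
            Set.singleton_subset_iff.mpr ⟨huadj, ih u hud⟩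
          have := Set.ncard_le_ncard h1 (Set.toFinite _)
          rw [Set.ncard_singleton] at this
          exact_mod_cast this
  refine ⟨S, ?_, hseed, ?_⟩
  · -- cardinality bound
    rw [hS, Set.ncard_coe_finset]
    have h1 : S₀.card ≤ 2 + ∑ v ∈ H, ((T v).card + 1) := by
      calc S₀.card ≤ ({a,b} : Finset V).card + (H.biUnion (fun v => insert v (T v))).card :=
            Finset.card_union_le _ _
      _ ≤ 2 + ∑ v ∈ H, (insert v (T v)).card := by
          gcongr
          · exact (Finset.card_insert_le _ _).trans (by simp)
          · exact Finset.card_biUnion_le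
      _ ≤ 2 + ∑ v ∈ H, ((T v).card + 1) := by
          gcongr with v hv
          exact (Finset.card_insert_le _ _).trans (by omega)
    have h2 : ((S₀.card : ℝ)) ≤ 2 + ∑ v ∈ H, (((T v).card : ℝ) + 1) := by
      calc (S₀.card : ℝ) ≤ ((2 + ∑ v ∈ H, ((T v).card + 1) : ℕ) : ℝ) := by exact_mod_cast h1
      _ = 2 + ∑ v ∈ H, (((T v).card : ℝ) + 1) := by push_cast; ring
    refine h2.trans ?_
    gcongr with v hv
    rw [hTcard]
    have hv1 : (1:ℝ) < ρ * (d v : ℝ) := by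
      simp only [hH, Finset.mem_filter, Finset.mem_univ, true_and] at hv
      rw [div_lt_iff₀ hρ0] at hv
      nlinarith
    have h3 : ((⌈ρ * (d v : ℝ)⌉.toNat : ℕ) : ℝ) = ((⌈ρ * (d v : ℝ)⌉ : ℤ) : ℝ) := by
      exact_mod_cast congrArg (fun z : ℤ => (z : ℝ))
        (Int.toNat_of_nonneg (Int.ceil_nonneg (by linarith : (0:ℝ) ≤ ρ * (d v : ℝ))))
    rw [h3]
  · -- full activation at diameter
    have hetop : G.ediam ≠ ⊤ := by
      obtain ⟨u, w, huw⟩ := G.exists_edist_eq_ediam_of_finite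
      rw [← huw]
      exact SimpleGraph.edist_ne_top_iff_reachable.mpr (hconn u w)
    exact Set.eq_univ_of_forall fun v =>
      hspread G.diam v (SimpleGraph.dist_le_diam hetop)
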